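/- Let n ≥ 22 be odd and m ≥ 5 with m ≤ (n−8)/6. There exists a 3-edge-coloring of the complete graph on (5n−5)/2 vertices with no rainbow triangle and no monochromatic copy of K_{1,n} ∪ K_{1,m}: partition the vertices into five sets of size (n−1)/2 each, color all edges inside each set with color 1, and color edges between the sets with colors 2 and 3 according to the unique 2-coloring of K_5 with no monochromatic triangle (two complementary 5-cycles). In this coloring no vertex has n or more incident edges of any single color. -/

import Mathlib

open Finset

/-- A symmetric edge-coloring of a complete graph (given as a function on ordered pairs). -/
def IsSymm2 {V C : Type*} (c : V → V → C) : Prop := ∀ a b : V, c a b = c b a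

/-- The coloring contains a rainbow triangle: three vertices whose three pairwise
edges receive three distinct colors. -/
def HasRainbowTriangle {V C : Type*} (c : V → V → C) : Prop :=
  ∃ a b d : V, a ≠ b ∧ a ≠ d ∧ b ≠ d ∧
    c a b ≠ c a d ∧ c a b ≠ c b d ∧ c a d ≠ c b d

/-- The coloring contains a monochromatic star `K_{1,n}`: a center `v` with `n`
incident edges of a single color. -/
def HasMonoStar {V C : Type*} (c : V → V → C) (n : ℕ) : Prop :=
  ∃ (i : C) (v : V) (S : Finset V), S.card = n ∧ v ∉ S ∧ ∀ x ∈ S, c v x = i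

/-- The coloring contains a monochromatic copy of `K_{1,n} ∪ K_{1,m}`: two
vertex-disjoint stars of the same color with `n` and `m` leaves respectively. -/
def HasMonoTwoStars {V C : Type*} (c : V → V → C) (n m : ℕ) : Prop :=
  ∃ (i : C) (u v : V) (S T : Finset V), u ≠ v ∧ S.card = n ∧ T.card = m ∧
    Disjoint S T ∧ u ∉ S ∧ u ∉ T ∧ v ∉ S ∧ v ∉ T ∧
    (∀ x ∈ S, c u x = i) ∧ (∀ y ∈ T, c v y = i)

/-- The 2-coloring (with a third "internal" color on the diagonal) of `K_5`
given by two complementary 5-cycles. -/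
def col5 (i j : Fin 5) : Fin 3 :=
  if i = j then 0 else if (i.val + 1) % 5 = j.val ∨ (j.val + 1) % 5 = i.val then 1 else 2

lemma col5_symm : ∀ i j : Fin 5, col5 i j = col5 j i := by decide

lemma col5_card : ∀ (b : Fin 5) (i : Fin 3),
    ((univ : Finset (Fin 5)).filter (fun j => col5 b j = i)).card ≤ 2 := by decide

lemma col5_no_rainbow : ∀ i j l : Fin 5,
    ¬ (col5 i j ≠ col5 i l ∧ col5 i j ≠ col5 j l ∧ col5 i l ≠ col5 j l) := by decide

/-- Lower-bound construction for odd `n`: a 3-edge-coloring of the complete graph on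
`(5n-5)/2` vertices with no rainbow triangle, no monochromatic `K_{1,n} ∪ K_{1,m}`,
in which moreover no vertex has `n` or more incident edges of any single color. -/
theorem lower_construction_small_m (n m M : ℕ) (hodd : Odd n) (hn : 22 ≤ n)
    (hm : 5 ≤ m) (hmn : 6 * m + 8 ≤ n) (hM : 2 * M = 5 * n - 5) :
    ∃ c : Fin M → Fin M → Fin 3,
      IsSymm2 c ∧ ¬ HasRainbowTriangle c ∧ ¬ HasMonoTwoStars c n m ∧
      ∀ (v : Fin M) (i : Fin 3),
        ((Finset.univ : Finset (Fin M)).filter (fun u => u ≠ v ∧ c v u = i)).card < n := by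
  obtain ⟨k, hk⟩ := hodd
  have hMk : M = 5 * k := by omega
  have hk0 : 0 < k := by omega
  have hblock : ∀ x : Fin M, x.val / k < 5 := by
    intro x
    have := x.isLt
    exact Nat.div_lt_of_lt_mul (by omega)
  set block : Fin M → Fin 5 := fun x => ⟨x.val / k, hblock x⟩ with hblockdef
  refine ⟨fun x y => col5 (block x) (block y), fun a b => col5_symm _ _, ?_, ?_, ?_⟩
  · rintro ⟨a, b, d, -, -, -, h1, h2, h3⟩
    exact col5_no_rainbow (block a) (block b) (block d) ⟨h1, h2, h3⟩
  · -- no mono two stars; follows from the degree bound below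
    rintro ⟨i, u, v, S, T, -, hS, -, -, huS, -, -, -, hcS, -⟩
    have hsub : S ⊆ (Finset.univ : Finset (Fin M)).filter
        (fun w => w ≠ u ∧ col5 (block u) (block w) = i) := by
      intro x hx
      simp only [mem_filter, mem_univ, true_and]
      exact ⟨fun h => huS (h ▸ hx), hcS x hx⟩
    have hcard := Finset.card_le_card hsub
    have hlt : ((Finset.univ : Finset (Fin M)).filter
        (fun w => w ≠ u ∧ col5 (block u) (block w) = i)).card < n := by
      calc ((Finset.univ : Finset (Fin M)).filter
            (fun w => w ≠ u ∧ col5 (block u) (block w) = i)).card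
          ≤ (((univ : Finset (Fin 5)).filter (fun j => col5 (block u) j = i)) ×ˢ
              Finset.range k).card := by
            apply Finset.card_le_card_of_injOn (fun w => (block w, w.val % k))
            · intro w hw
              simp only [Finset.mem_coe, mem_filter, mem_univ, true_and] at hw
              simp only [Finset.mem_coe, Finset.mem_product, mem_filter, mem_univ, true_and,
                Finset.mem_range]
              exact ⟨hw.2, Nat.mod_lt _ hk0⟩
            · intro a _ b _ h
              have h1 : block a = block b := congrArg Prod.fst h
              have h2 : a.val % k = b.val % k := congrArg Prod.snd h
              have h3 : a.val / k = b.val / k := congrArg Fin.val h1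
              refine Fin.ext ?_
              conv_lhs => rw [← Nat.div_add_mod a.val k]
              conv_rhs => rw [← Nat.div_add_mod b.val k]
              rw [h3, h2]
        _ = ((univ : Finset (Fin 5)).filter (fun j => col5 (block u) j = i)).card * k := by
            rw [Finset.card_product, Finset.card_range]
        _ ≤ 2 * k := Nat.mul_le_mul_right k (col5_card _ _)
        _ < n := by omega
    omega
  · intro v i
    calc ((Finset.univ : Finset (Fin M)).filter
          (fun w => w ≠ v ∧ col5 (block v) (block w) = i)).card
        ≤ (((univ : Finset (Fin 5)).filter (fun j => col5 (block v) j = i)) ×ˢ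
            Finset.range k).card := by
          apply Finset.card_le_card_of_injOn (fun w => (block w, w.val % k))
          · intro w hw
            simp only [Finset.mem_coe, mem_filter, mem_univ, true_and] at hw
            simp only [Finset.mem_coe, Finset.mem_product, mem_filter, mem_univ, true_and,
              Finset.mem_range]
            exact ⟨hw.2, Nat.mod_lt _ hk0⟩
          · intro a _ b _ h
            have h1 : block a = block b := congrArg Prod.fst h
            have h2 : a.val % k = b.val % k := congrArg Prod.snd h
            have h3 : a.val / k = b.val / k := congrArg Fin.val h1
            refine Fin.ext ?_
            conv_lhs => rw [← Nat.div_add_mod a.val k]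
            conv_rhs => rw [← Nat.div_add_mod b.val k]
            rw [h3, h2]
      _ = ((univ : Finset (Fin 5)).filter (fun j => col5 (block v) j = i)).card * k := by
          rw [Finset.card_product, Finset.card_range]
      _ ≤ 2 * k := Nat.mul_le_mul_right k (col5_card _ _)
      _ < n := by omega
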